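/- Let d be a positive odd integer, k = ⌊d/4⌋, and define c_j = (∏_{1≤ℓ≤k} (d - 2j - 2ℓ)) / (∏_{1≤ℓ≤k, ℓ≠j} (2ℓ - 2j)) for 1 ≤ j ≤ k. Then for every integer m with 1 ≤ m ≤ k, one has ∑_{j=1}^{k} c_j / (d - 2m - 2j) = 1. -/
import Mathlib

open Polynomial Lagrange Finset

/-- The coefficient of the Lagrange basis polynomial in degree `#s - 1` is the nodal weight. -/
lemma basis_coeff_top {F : Type*} [Field F] {ι : Type*} [DecidableEq ι]
    {s : Finset ι} {v : ι → F} (hvs : Set.InjOn v s) {i : ι} (hi : i ∈ s) :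
    (Lagrange.basis s v i).coeff (#s - 1) = nodalWeight s v i := by
  rw [show #s - 1 = (Lagrange.basis s v i).natDegree from (natDegree_basis hvs hi).symm,
    ← leadingCoeff]
  rw [Lagrange.basis, leadingCoeff_prod, nodalWeight]
  refine Finset.prod_congr rfl fun j hj => ?_
  rw [basisDivisor, leadingCoeff_mul, leadingCoeff_C, leadingCoeff_X_sub_C, mul_one]

/-- Divided-difference identity: the sum of values of a monic polynomial of degree `#s - 1`
weighted by nodal weights equals 1. -/
lemma sum_eval_mul_nodalWeight {F : Type*} [Field F] {ι : Type*} [DecidableEq ι]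
    {s : Finset ι} {v : ι → F} (hvs : Set.InjOn v s) (hs : s.Nonempty)
    {Q : F[X]} (hQm : Q.Monic) (hQd : Q.natDegree = #s - 1) :
    ∑ i ∈ s, Q.eval (v i) * nodalWeight s v i = 1 := by
  have hcard : 1 ≤ #s := Finset.card_pos.mpr hs
  have hdeg : Q.degree < #s := by
    rw [degree_eq_natDegree hQm.ne_zero, hQd]
    exact_mod_cast Nat.sub_lt hcard one_pos
  have hI := Lagrange.eq_interpolate hvs hdeg
  have h2 := congrArg (fun p => Polynomial.coeff p (#s - 1)) hI
  simp only [interpolate_apply, finset_sum_coeff, coeff_C_mul] at h2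
  have h3 : Q.coeff (#s - 1) = 1 := by rw [← hQd]; exact hQm.coeff_natDegree
  calc ∑ i ∈ s, Q.eval (v i) * nodalWeight s v i
      = ∑ i ∈ s, Q.eval (v i) * (Lagrange.basis s v i).coeff (#s - 1) :=
        Finset.sum_congr rfl fun i hi => by rw [basis_coeff_top hvs hi]
    _ = Q.coeff (#s - 1) := h2.symm
    _ = 1 := h3

/-- For `d` a positive odd integer, `k = ⌊d/4⌋`, and the coefficients
`c j = (∏_{1≤ℓ≤k} (d - 2j - 2ℓ)) / (∏_{1≤ℓ≤k, ℓ≠j} (2ℓ - 2j))`, one has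
`∑_{j=1}^{k} c j / (d - 2m - 2j) = 1` for every `1 ≤ m ≤ k`. -/
theorem ci_identity_one (d : ℕ) (hd : Odd d) (hd0 : 0 < d)
    (c : ℕ → ℝ)
    (hc : ∀ j, c j =
      (∏ ℓ ∈ Finset.Icc 1 (d / 4), ((d : ℝ) - 2 * (j : ℝ) - 2 * (ℓ : ℝ))) /
        ∏ ℓ ∈ (Finset.Icc 1 (d / 4)).erase j, (2 * (ℓ : ℝ) - 2 * (j : ℝ)))
    (m : ℕ) (hm1 : 1 ≤ m) (hm2 : m ≤ d / 4) :
    ∑ j ∈ Finset.Icc 1 (d / 4), c j / ((d : ℝ) - 2 * (m : ℝ) - 2 * (j : ℝ)) = 1 := by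
  set k := d / 4 with hk
  set s : Finset ℕ := Finset.Icc 1 k with hs
  have hm : m ∈ s := Finset.mem_Icc.mpr ⟨hm1, hm2⟩
  have hcards : #s = k := by simp [hs, Nat.card_Icc]
  -- nonzero denominators from oddness of d
  have hne : ∀ j l : ℕ, (d : ℝ) - 2 * (j : ℝ) - 2 * (l : ℝ) ≠ 0 := by
    intro j l h
    have : (d : ℝ) = ((2 * (j + l) : ℕ) : ℝ) := by push_cast; linarith
    have hdeq : d = 2 * (j + l) := Nat.cast_injective this
    obtain ⟨t, ht⟩ := hd
    omega
  -- node map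
  set v : ℕ → ℝ := fun j => -2 * (j : ℝ) with hv
  have hvs : Set.InjOn v s := by
    intro a _ b _ hab
    have : (a : ℝ) = b := by simp only [hv] at hab; linarith
    exact_mod_cast this
  set Q : ℝ[X] := Lagrange.nodal (s.erase m) (fun ℓ => 2 * (ℓ : ℝ) - d) with hQ
  have hQm : Q.Monic := Lagrange.nodal_monic
  have hQd : Q.natDegree = #s - 1 := by
    rw [hQ, Lagrange.natDegree_nodal, Finset.card_erase_of_mem hm]
  have key : ∀ j ∈ s, c j / ((d : ℝ) - 2 * (m : ℝ) - 2 * (j : ℝ))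
      = Q.eval (v j) * nodalWeight s v j := by
    intro j hj
    have hprod : (∏ ℓ ∈ s, ((d : ℝ) - 2 * (j : ℝ) - 2 * (ℓ : ℝ)))
        = ((d : ℝ) - 2 * (j : ℝ) - 2 * (m : ℝ)) *
          ∏ ℓ ∈ s.erase m, ((d : ℝ) - 2 * (j : ℝ) - 2 * (ℓ : ℝ)) :=
      (Finset.mul_prod_erase s _ hm).symm
    have hx : ((d : ℝ) - 2 * (m : ℝ) - 2 * (j : ℝ)) ≠ 0 := hne m j
    have hQev : Q.eval (v j) = ∏ ℓ ∈ s.erase m, ((d : ℝ) - 2 * (j : ℝ) - 2 * (ℓ : ℝ)) := by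
      rw [hQ, Lagrange.eval_nodal]
      refine Finset.prod_congr rfl fun l _ => by simp [hv]; ring
    have hw : nodalWeight s v j
        = (∏ ℓ ∈ s.erase j, (2 * (ℓ : ℝ) - 2 * (j : ℝ)))⁻¹ := by
      rw [nodalWeight, ← Finset.prod_inv_distrib]
      refine Finset.prod_congr rfl fun l _ => by rw [hv]; congr 1; ring
    have h1 : ((d : ℝ) - 2 * (j : ℝ) - 2 * (m : ℝ)) = ((d : ℝ) - 2 * (m : ℝ) - 2 * (j : ℝ)) := by
      ring
    rw [hc j, hprod, h1, hQev, hw, div_div,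
      mul_comm (∏ ℓ ∈ s.erase j, (2 * (ℓ : ℝ) - 2 * (j : ℝ))) ((d : ℝ) - 2 * (m : ℝ) - 2 * (j : ℝ)),
      mul_div_mul_left _ _ hx, div_eq_mul_inv]
  rw [Finset.sum_congr rfl key]
  exact sum_eval_mul_nodalWeight hvs ⟨m, hm⟩ hQm (by rw [hQd])
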